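/- The integral of 1/√Δ(t) over the octahedron 𝒪 = {t : |t₁₁|+|t₂₂|+|t₃₃| ≤ 1} equals (4−π)π, where Δ(t) = ((t₁₁+t₂₂)² − (1−t₃₃)²)·((t₁₁−t₂₂)² − (1+t₃₃)²); consequently the ratio of the separable to the total quantum Fisher volume is (4−π)/π. -/

import Mathlib

open MeasureTheory Real

def octa : Set (Fin 3 → ℝ) := {t | |t 0| + |t 1| + |t 2| ≤ 1}

/-- `Δ(t) = ((t₁₁+t₂₂)² − (1−t₃₃)²)((t₁₁−t₂₂)² − (1+t₃₃)²)`. -/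
noncomputable def deltaFun (t : Fin 3 → ℝ) : ℝ :=
  ((t 0 + t 1)^2 - (1 - t 2)^2) * ((t 0 - t 1)^2 - (1 + t 2)^2)

section QFVAux
open ENNReal


lemma hasDerivAt_arcsin_div {a x : ℝ} (ha : 0 < a) (hx : |x| < a) :
    HasDerivAt (fun u => Real.arcsin (u / a)) (1 / Real.sqrt (a^2 - x^2)) x := by
  have h1 : x / a ≠ -1 := by
    have := abs_lt.1 hx
    intro h; rw [div_eq_iff ha.ne'] at h; linarith [this.1]
  have h2 : x / a ≠ 1 := by
    have := abs_lt.1 hx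
    intro h; rw [div_eq_iff ha.ne'] at h; linarith [this.2]
  have hd := (Real.hasDerivAt_arcsin h1 h2).comp x ((hasDerivAt_id x).div_const a)
  refine hd.congr_deriv ?_
  have hpos : 0 < a^2 - x^2 := by nlinarith [abs_lt.1 hx, abs_nonneg x]
  have h3 : 1 - (x/a)^2 = (a^2 - x^2) / a^2 := by field_simp
  rw [h3, Real.sqrt_div' _ (by positivity), Real.sqrt_sq ha.le]
  have hs : 0 < Real.sqrt (a^2-x^2) := Real.sqrt_pos.2 hpos
  field_simp


lemma contOn_arcsin_div {a : ℝ} : Continuous (fun u : ℝ => Real.arcsin (u / a)) :=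
  Real.continuous_arcsin.comp (continuous_id.div_const a)

lemma intervalIntegrable_one_div_sqrt_sq_sub_sq {a r : ℝ} (ha : 0 < a) (hr : 0 ≤ r)
    (hra : r ≤ a) :
    IntervalIntegrable (fun u => 1 / Real.sqrt (a^2 - u^2)) volume (-r) r := by
  apply intervalIntegral.intervalIntegrable_deriv_of_nonneg
    (g := fun u => Real.arcsin (u / a)) contOn_arcsin_div.continuousOn
  · intro x hx
    have hmin : min (-r) r = -r := min_eq_left (by linarith)
    have hmax : max (-r) r = r := max_eq_right (by linarith)
    rw [hmin, hmax, Set.mem_Ioo] at hx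
    have hx' : |x| < a := by
      rw [abs_lt]; constructor <;> [linarith [hx.1]; linarith [hx.2]]
    exact hasDerivAt_arcsin_div ha hx'
  · intro x _; positivity

lemma integral_one_div_sqrt_sq_sub_sq {a r : ℝ} (ha : 0 < a) (hr : 0 ≤ r) (hra : r ≤ a) :
    ∫ u in (-r)..r, 1 / Real.sqrt (a^2 - u^2) = 2 * Real.arcsin (r / a) := by
  have key := intervalIntegral.integral_eq_sub_of_hasDeriv_right_of_le
    (f := fun u => Real.arcsin (u / a)) (f' := fun u => 1 / Real.sqrt (a^2 - u^2))
    (by linarith : -r ≤ r) contOn_arcsin_div.continuousOn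
    (fun x hx => by
      have hx' : |x| < a := by
        rw [Set.mem_Ioo] at hx; rw [abs_lt]
        constructor <;> [linarith [hx.1]; linarith [hx.2]]
      exact (hasDerivAt_arcsin_div ha hx').hasDerivWithinAt)
    (intervalIntegrable_one_div_sqrt_sq_sub_sq ha hr hra)
  rw [key]; simp only [neg_div, Real.arcsin_neg]; ring

lemma contOn_arcsin_ratio : ContinuousOn (fun c : ℝ => Real.arcsin ((1 - c) / (1 + c)))
    (Set.Icc 0 1) := by
  apply Real.continuous_arcsin.comp_continuousOn
  apply ContinuousOn.div (by fun_prop) (by fun_prop)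
  intro x hx; rcases hx with ⟨h0, h1⟩; intro h; exact absurd h (by norm_num; linarith)

lemma integral_arcsin_ratio :
    ∫ c in (0:ℝ)..1, Real.arcsin ((1 - c) / (1 + c)) = 2 - π / 2 := by
  have key := intervalIntegral.integral_eq_sub_of_hasDeriv_right_of_le
    (f := fun c => (1 + c) * Real.arcsin ((1 - c) / (1 + c)) + 2 * Real.sqrt c)
    (f' := fun c => Real.arcsin ((1 - c) / (1 + c)))
    (by norm_num : (0:ℝ) ≤ 1)
    (by
      apply ContinuousOn.add (ContinuousOn.mul (by fun_prop) contOn_arcsin_ratio)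
      fun_prop)
    (fun c hc => by
      rcases hc with ⟨hc0, hc1⟩
      have h1c : (0:ℝ) < 1 + c := by linarith
      have hsc : Real.sqrt c ≠ 0 := by positivity
      have hs1 : (1 - c) / (1 + c) ≠ 1 := by
        intro h; rw [div_eq_iff h1c.ne'] at h; linarith
      have hs2 : (1 - c) / (1 + c) ≠ -1 := by
        intro h; rw [div_eq_iff h1c.ne'] at h; linarith
      have hds : HasDerivAt (fun c : ℝ => (1 - c) / (1 + c)) (-2 / (1 + c)^2) c := by
        have := ((hasDerivAt_id c).const_sub 1).div ((hasDerivAt_id c).const_add 1) h1c.ne'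
        refine this.congr_deriv ?_; simp only [id_eq]; field_simp; ring
      have harc := (Real.hasDerivAt_arcsin hs2 hs1).comp c hds
      have hmul := ((hasDerivAt_id c).const_add 1).mul harc
      have hsq : HasDerivAt (fun c : ℝ => 2 * Real.sqrt c) (1 / Real.sqrt c) c := by
        have := (Real.hasDerivAt_sqrt (by linarith : c ≠ 0)).const_mul 2
        refine this.congr_deriv ?_; field_simp
      have total := hmul.add hsq
      refine (total.congr_deriv ?_).hasDerivWithinAt
      have hss : Real.sqrt (1 - ((1 - c) / (1 + c))^2) = 2 * Real.sqrt c / (1 + c) := by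
        have h4 : 1 - ((1 - c) / (1 + c))^2 = 4 * c / (1 + c)^2 := by field_simp; ring
        rw [h4]
        rw [show (4:ℝ) * c = (2 * Real.sqrt c)^2 by
          rw [mul_pow, Real.sq_sqrt hc0.le]; ring]
        rw [Real.sqrt_div (sq_nonneg _), Real.sqrt_sq (by positivity), Real.sqrt_sq h1c.le]
      rw [hss]
      have hsc' : (0:ℝ) < Real.sqrt c := Real.sqrt_pos.2 hc0
      simp only [id_eq, Function.comp_apply]
      field_simp
      ring)
    ((contOn_arcsin_ratio.mono (by norm_num [Set.uIcc_of_le])).intervalIntegrable)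
  rw [key]
  norm_num [Real.sqrt_one, Real.arcsin_one]

noncomputable def core (w x y : ℝ) : ℝ :=
  1 / Real.sqrt (((x + y)^2 - (1 - w)^2) * ((x - y)^2 - (1 + w)^2))

noncomputable def Phi (p : ℝ × ℝ × ℝ) : ℝ≥0∞ :=
  if |p.2.1| + |p.2.2| + |p.1| ≤ 1 then ENNReal.ofReal (core p.1 p.2.1 p.2.2) else 0

lemma measurable_core : Measurable (fun p : ℝ × ℝ × ℝ => core p.1 p.2.1 p.2.2) := by
  unfold core; fun_prop

lemma measurable_Phi : Measurable Phi := by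
  unfold Phi
  exact Measurable.ite
    (measurableSet_le (by fun_prop) measurable_const)
    (ENNReal.measurable_ofReal.comp measurable_core) measurable_const

lemma cond_iff (u v r : ℝ) : |u + v| + |u - v| ≤ 2 * r ↔ |u| ≤ r ∧ |v| ≤ r := by
  constructor
  · intro h
    have e1 : |2 * u| ≤ |u + v| + |u - v| := by
      calc |2 * u| = |(u + v) + (u - v)| := congrArg abs (by ring)
        _ ≤ _ := abs_add_le _ _
    have e2 : |2 * v| ≤ |u + v| + |u - v| := by
      calc |2 * v| = |(u + v) - (u - v)| := congrArg abs (by ring)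
        _ ≤ _ := abs_sub _ _
    rw [abs_mul] at e1 e2
    norm_num at e1 e2
    constructor <;> linarith
  · rintro ⟨h1, h2⟩
    have h1' := abs_le.1 h1
    have h2' := abs_le.1 h2
    rcases le_total 0 (u + v) with h | h <;> rcases le_total 0 (u - v) with h' | h'
    · rw [abs_of_nonneg h, abs_of_nonneg h']; linarith
    · rw [abs_of_nonneg h, abs_of_nonpos h']; linarith
    · rw [abs_of_nonpos h, abs_of_nonneg h']; linarith
    · rw [abs_of_nonpos h, abs_of_nonpos h']; linarith

lemma lintegral_slice {a r : ℝ} (hr : 0 ≤ r) (hra : r ≤ a) :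
    ∫⁻ u : ℝ, (Set.Icc (-r) r).indicator
        (fun u => ENNReal.ofReal (1 / Real.sqrt (a^2 - u^2))) u
      = ENNReal.ofReal (2 * Real.arcsin (r / a)) := by
  rw [lintegral_indicator measurableSet_Icc]
  rcases eq_or_lt_of_le hr with h0 | h0
  · have : Set.Icc (-r) r = {0} := by rw [← h0]; norm_num
    rw [setLIntegral_measure_zero _ _ (by rw [this]; exact Real.volume_singleton), ← h0]
    simp [Real.arcsin_zero]
  · have ha : 0 < a := lt_of_lt_of_le h0 hra
    have hInt : IntegrableOn (fun u => 1 / Real.sqrt (a^2 - u^2)) (Set.Icc (-r) r) := by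
      rw [← intervalIntegrable_iff_integrableOn_Icc_of_le (by linarith)]
      exact intervalIntegrable_one_div_sqrt_sq_sub_sq ha hr hra
    rw [← ofReal_integral_eq_lintegral_ofReal hInt (ae_of_all _ fun u => by positivity)]
    congr 1
    rw [MeasureTheory.integral_Icc_eq_integral_Ioc,
      ← intervalIntegral.integral_of_le (by linarith : -r ≤ r)]
    exact integral_one_div_sqrt_sq_sub_sq ha hr hra

noncomputable def Hfun (w : ℝ) : ℝ :=
  if |w| ≤ 1 then π * Real.arcsin ((1 - |w|) / (1 + |w|)) else 0

noncomputable def oneD (a r : ℝ) : ℝ → ℝ≥0∞ := fun u =>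
  (Set.Icc (-r) r).indicator (fun u => ENNReal.ofReal (1 / Real.sqrt (a^2 - u^2))) u

lemma measurable_oneD (a r : ℝ) : Measurable (oneD a r) :=
  Measurable.indicator (by fun_prop) measurableSet_Icc

lemma factorize {w : ℝ} (hw : |w| ≤ 1) (u v : ℝ) :
    Phi (w, (u + v)/2, (u - v)/2)
      = oneD (1 - w) (1 - |w|) u * oneD (1 + w) (1 - |w|) v := by
  set r := 1 - |w| with hrdef
  have hcond : (|(u + v)/2| + |(u - v)/2| + |w| ≤ 1) ↔ (|u| ≤ r ∧ |v| ≤ r) := by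
    rw [← cond_iff u v r]
    rw [abs_div, abs_div]
    norm_num
    constructor <;> intro h <;> linarith
  unfold Phi oneD
  by_cases h1 : |u| ≤ r <;> by_cases h2 : |v| ≤ r
  · rw [if_pos (hcond.2 ⟨h1, h2⟩), Set.indicator_of_mem (Set.mem_Icc.2 (abs_le.1 h1)),
      Set.indicator_of_mem (Set.mem_Icc.2 (abs_le.1 h2))]
    have e1 : (u + v)/2 + (u - v)/2 = u := by ring
    have e2 : (u + v)/2 - (u - v)/2 = v := by ring
    unfold core
    simp only [e1, e2]
    have hwa := le_abs_self w
    have hwb := neg_abs_le w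
    have habs_u := abs_le.1 h1
    have habs_v := abs_le.1 h2
    have hu2 : 0 ≤ (1 - w)^2 - u^2 := by nlinarith
    have hv2 : 0 ≤ (1 + w)^2 - v^2 := by nlinarith
    rw [show (u^2 - (1 - w)^2) * (v^2 - (1 + w)^2)
        = ((1 - w)^2 - u^2) * ((1 + w)^2 - v^2) from by ring]
    rw [Real.sqrt_mul hu2, ← ENNReal.ofReal_mul (by positivity), one_div_mul_one_div]
  · rw [if_neg (fun hc => h2 (hcond.1 hc).2),
      Set.indicator_of_notMem (fun hm => h2 (abs_le.2 (Set.mem_Icc.1 hm))), mul_zero]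
  · rw [if_neg (fun hc => h1 (hcond.1 hc).1),
      Set.indicator_of_notMem (fun hm => h1 (abs_le.2 (Set.mem_Icc.1 hm))), zero_mul]
  · rw [if_neg (fun hc => h1 (hcond.1 hc).1),
      Set.indicator_of_notMem (fun hm => h1 (abs_le.2 (Set.mem_Icc.1 hm))), zero_mul]

lemma lintegral_oneD {a r : ℝ} (hr : 0 ≤ r) (hra : r ≤ a) :
    ∫⁻ u : ℝ, oneD a r u = ENNReal.ofReal (2 * Real.arcsin (r / a)) :=
  lintegral_slice hr hra

lemma slice_eq (w : ℝ) :
    ∫⁻ q : ℝ × ℝ, Phi (w, q) = ENNReal.ofReal (Hfun w) := by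
  by_cases hw : |w| ≤ 1
  swap
  · have hz : ∀ q : ℝ × ℝ, Phi (w, q) = 0 := by
      intro q
      refine if_neg fun hc => hw ?_
      have := abs_nonneg q.1
      have := abs_nonneg q.2
      linarith
    simp [hz, Hfun, hw]
  · have hr : (0:ℝ) ≤ 1 - |w| := by linarith
    have hra : 1 - |w| ≤ 1 - w := by linarith [le_abs_self w]
    have hrb : 1 - |w| ≤ 1 + w := by linarith [neg_abs_le w]
    have hPhiq : Measurable fun q : ℝ × ℝ => Phi (w, q) :=
      measurable_Phi.comp (measurable_const.prodMk measurable_id)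
    have step1 : ∫⁻ q : ℝ × ℝ, Phi (w, q) = ∫⁻ y, ∫⁻ x, Phi (w, x, y) := by
      rw [Measure.volume_eq_prod]
      exact lintegral_prod_symm' _ hPhiq
    have step2 : ∀ y, ∫⁻ x, Phi (w, x, y) = ∫⁻ u, Phi (w, u - y, y) := by
      intro y
      have := lintegral_add_right_eq_self (μ := volume) (fun u => Phi (w, u - y, y)) y
      simp only [add_sub_cancel_right] at this
      exact this
    have hmeas2 : Measurable fun p : ℝ × ℝ => Phi (w, p.2 - p.1, p.1) :=
      measurable_Phi.comp (measurable_const.prodMk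
        ((measurable_snd.sub measurable_fst).prodMk measurable_fst))
    have step3 : ∫⁻ y, ∫⁻ u, Phi (w, u - y, y) = ∫⁻ u, ∫⁻ y, Phi (w, u - y, y) := by
      rw [lintegral_lintegral_swap hmeas2.aemeasurable]
    have step4 : ∀ u, ∫⁻ y, Phi (w, u - y, y)
        = ENNReal.ofReal 2⁻¹ * ∫⁻ v, Phi (w, (u + v)/2, (u - v)/2) := by
      intro u
      have hF : Measurable (fun t : ℝ => Phi (w, (u + t)/2, (u - t)/2)) :=
        measurable_Phi.comp (measurable_const.prodMk
          (((measurable_id.const_add u).div_const 2).prodMk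
            ((measurable_id.const_sub u).div_const 2)))
      have hptw : ∀ y, Phi (w, u - y, y)
          = (fun t : ℝ => Phi (w, (u + t)/2, (u - t)/2)) (u + (-2) * y) := by
        intro y
        show Phi _ = Phi _
        have harg : ((w, u - y, y) : ℝ × ℝ × ℝ)
            = (w, (u + (u + (-2) * y))/2, (u - (u + (-2) * y))/2) := by
          simp only [Prod.mk.injEq]
          exact ⟨trivial, by ring, by ring⟩
        rw [harg]
      rw [lintegral_congr hptw]
      have e1 : ∫⁻ y, (fun t : ℝ => Phi (w, (u + t)/2, (u - t)/2)) (u + (-2) * y)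
          = ∫⁻ z, (fun t : ℝ => Phi (w, (u + t)/2, (u - t)/2)) (u + z)
              ∂(Measure.map (fun y => (-2 : ℝ) * y) volume) :=
        (lintegral_map (hF.comp (measurable_id.const_add u))
          (measurable_const_mul (-2))).symm
      rw [e1, Real.map_volume_mul_left (by norm_num : ((-2):ℝ) ≠ 0),
        lintegral_smul_measure,
        lintegral_add_left_eq_self (fun t : ℝ => Phi (w, (u + t)/2, (u - t)/2)) u]
      congr 1
      rw [show |(-2 : ℝ)⁻¹| = 2⁻¹ by rw [abs_of_neg (by norm_num)]; norm_num]
    rw [step1, lintegral_congr step2, step3, lintegral_congr step4]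
    have step5 : ∀ u, ∫⁻ v, Phi (w, (u + v)/2, (u - v)/2)
        = oneD (1 - w) (1 - |w|) u
            * ENNReal.ofReal (2 * Real.arcsin ((1 - |w|) / (1 + w))) := by
      intro u
      rw [lintegral_congr (factorize hw u),
        lintegral_const_mul _ (measurable_oneD (1 + w) (1 - |w|)),
        lintegral_oneD hr hrb]
    simp_rw [step5]
    simp_rw [show ∀ x : ℝ≥0∞, ENNReal.ofReal 2⁻¹
        * (x * ENNReal.ofReal (2 * Real.arcsin ((1 - |w|) / (1 + w))))
      = (ENNReal.ofReal 2⁻¹ * ENNReal.ofReal (2 * Real.arcsin ((1 - |w|) / (1 + w)))) * x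
      from fun x => by ring]
    have harc_nn : 0 ≤ Real.arcsin ((1 - |w|) / (1 + w)) :=
      Real.arcsin_nonneg.2 (div_nonneg hr (by linarith))
    rw [lintegral_const_mul _ (measurable_oneD (1 - w) (1 - |w|)),
      lintegral_oneD hr hra,
      ← ENNReal.ofReal_mul (by norm_num), ← ENNReal.ofReal_mul (by positivity)]
    congr 1
    rw [Hfun, if_pos hw]
    rcases le_or_gt 0 w with hw0 | hw0
    · have habs : |w| = w := abs_of_nonneg hw0
      rcases eq_or_lt_of_le hw with h1 | h1
      · have hw1 : w = 1 := by rw [habs] at h1; linarith [h1.symm]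
        rw [habs, hw1]
        norm_num
      · have ha0 : (1:ℝ) - w ≠ 0 := by rw [habs] at h1; intro h; linarith
        rw [habs, div_self ha0, Real.arcsin_one]
        ring
    · have habs : |w| = -w := abs_of_neg hw0
      rcases eq_or_ne w (-1) with hw1 | hw1
      · rw [habs, hw1]
        norm_num
      · have hb0 : (1:ℝ) + w ≠ 0 := by intro h; exact hw1 (by linarith)
        rw [habs, show (1:ℝ) - -w = 1 + w by ring, div_self hb0, Real.arcsin_one]
        ring

noncomputable def hfun (w : ℝ) : ℝ := π * Real.arcsin ((1 - |w|) / (1 + |w|))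

lemma Hfun_eq_indicator : Hfun = (Set.Icc (-1 : ℝ) 1).indicator hfun := by
  funext w
  rw [Hfun, Set.indicator_apply]
  by_cases h : |w| ≤ 1
  · rw [if_pos h, if_pos (Set.mem_Icc.2 (abs_le.1 h))]; rfl
  · rw [if_neg h, if_neg (fun hm => h (abs_le.2 (Set.mem_Icc.1 hm)))]

lemma measurable_hfun : Measurable hfun := by
  unfold hfun
  exact (measurable_const.mul (Real.continuous_arcsin.measurable.comp
    (by fun_prop : Measurable fun w : ℝ => (1 - |w|) / (1 + |w|))))

lemma integrableOn_hfun : IntegrableOn hfun (Set.Icc (-1 : ℝ) 1) := by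
  apply Measure.integrableOn_of_bounded (M := π * (π / 2))
  · rw [Real.volume_Icc]; exact ENNReal.ofReal_ne_top
  · exact measurable_hfun.aestronglyMeasurable
  · refine ae_of_all _ fun w => ?_
    rw [hfun, Real.norm_eq_abs, abs_mul, abs_of_pos Real.pi_pos]
    have h1 := Real.arcsin_mem_Icc ((1 - |w|) / (1 + |w|))
    have h2 : |Real.arcsin ((1 - |w|) / (1 + |w|))| ≤ π / 2 :=
      abs_le.2 ⟨h1.1, h1.2⟩
    exact mul_le_mul_of_nonneg_left h2 Real.pi_pos.le

lemma Hfun_nonneg (w : ℝ) : 0 ≤ Hfun w := by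
  rw [Hfun]
  by_cases h : |w| ≤ 1
  · rw [if_pos h]
    refine mul_nonneg Real.pi_pos.le (Real.arcsin_nonneg.2 (div_nonneg (by linarith)
      (by positivity)))
  · rw [if_neg h]

lemma integral_Hfun : ∫ w, Hfun w = (4 - π) * π := by
  rw [Hfun_eq_indicator, integral_indicator measurableSet_Icc,
    MeasureTheory.integral_Icc_eq_integral_Ioc,
    ← intervalIntegral.integral_of_le (by norm_num : (-1:ℝ) ≤ 1)]
  have hI : IntervalIntegrable hfun volume (-1) 1 :=
    (intervalIntegrable_iff_integrableOn_Icc_of_le (by norm_num)).2 integrableOn_hfun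
  have hI1 : IntervalIntegrable hfun volume (-1) 0 :=
    hI.mono_set (by rw [Set.uIcc_of_le (by norm_num : (-1:ℝ) ≤ 0),
      Set.uIcc_of_le (by norm_num : (-1:ℝ) ≤ 1)]; exact Set.Icc_subset_Icc_right (by norm_num))
  have hI2 : IntervalIntegrable hfun volume 0 1 :=
    hI.mono_set (by rw [Set.uIcc_of_le (by norm_num : (0:ℝ) ≤ 1),
      Set.uIcc_of_le (by norm_num : (-1:ℝ) ≤ 1)]; exact Set.Icc_subset_Icc_left (by norm_num))
  rw [← intervalIntegral.integral_add_adjacent_intervals hI1 hI2]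
  have hneg : ∫ x in (-1 : ℝ)..0, hfun x = ∫ x in (0:ℝ)..1, hfun x := by
    have := intervalIntegral.integral_comp_neg (a := (0:ℝ)) (b := 1) (f := hfun)
    rw [neg_zero] at this
    rw [← this]
    apply intervalIntegral.integral_congr
    intro x _
    simp [hfun, abs_neg]
  have hval : ∫ x in (0:ℝ)..1, hfun x = π * (2 - π / 2) := by
    have : ∫ x in (0:ℝ)..1, hfun x
        = ∫ x in (0:ℝ)..1, π * Real.arcsin ((1 - x) / (1 + x)) := by
      apply intervalIntegral.integral_congr
      intro x hx
      rw [Set.uIcc_of_le (by norm_num : (0:ℝ) ≤ 1)] at hx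
      rw [hfun, abs_of_nonneg hx.1]
    rw [this, intervalIntegral.integral_const_mul, integral_arcsin_ratio]
  rw [hneg, hval]
  ring

lemma lintegral_Phi : ∫⁻ p : ℝ × ℝ × ℝ, Phi p = ENNReal.ofReal ((4 - π) * π) := by
  rw [Measure.volume_eq_prod, lintegral_prod _ measurable_Phi.aemeasurable]
  have : ∀ w : ℝ, ∫⁻ q : ℝ × ℝ, Phi (w, q) = ENNReal.ofReal (Hfun w) := slice_eq
  rw [lintegral_congr this,
    ← ofReal_integral_eq_lintegral_ofReal
      (by rw [Hfun_eq_indicator]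
          exact (integrable_indicator_iff measurableSet_Icc).2 integrableOn_hfun)
      (ae_of_all _ Hfun_nonneg),
    integral_Hfun]

end QFVAux

/-- The quantum Fisher volume of separable two-qubit states with maximally disordered
subsystems: `∫_𝒪 Δ(t)^{-1/2} dt = (4−π)π`; consequently the ratio of the separable
to the total quantum Fisher volume `π²` is `(4−π)/π`. -/
theorem quantum_fisher_volume_octa :
    (∫ t in octa, 1 / Real.sqrt (deltaFun t) = (4 - π) * π) ∧
    ((4 - π) * π / π ^ 2 = (4 - π) / π) := by
  constructor
  · classical
    have hocta : MeasurableSet octa :=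
      measurableSet_le (by fun_prop) measurable_const
    have hdmeas : Measurable deltaFun := by unfold deltaFun; fun_prop
    have hgmeas : Measurable (fun t : Fin 3 → ℝ => 1 / Real.sqrt (deltaFun t)) :=
      measurable_const.div (Real.continuous_sqrt.measurable.comp hdmeas)
    rw [← integral_indicator hocta]
    have e1 := MeasureTheory.volume_preserving_piFinSuccAbove (fun _ : Fin 3 => ℝ) 2
    have e2 := (MeasurePreserving.id (volume : Measure ℝ)).prod
      (volume_preserving_finTwoArrow ℝ)
    have ecomp := e2.comp e1
    have key : ∫⁻ t : Fin 3 → ℝ, ENNReal.ofReal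
          (octa.indicator (fun t => 1 / Real.sqrt (deltaFun t)) t)
        = ∫⁻ p : ℝ × ℝ × ℝ, Phi p := by
      have hcomp := ecomp.lintegral_comp measurable_Phi
      rw [Measure.volume_eq_prod, ← hcomp]
      apply lintegral_congr
      intro t
      have hFt : (Prod.map id MeasurableEquiv.finTwoArrow)
          ((MeasurableEquiv.piFinSuccAbove (fun _ : Fin 3 => ℝ) 2) t)
          = (t 2, t 0, t 1) := by
        simp [MeasurableEquiv.piFinSuccAbove_apply, MeasurableEquiv.finTwoArrow,
          MeasurableEquiv.piFinTwo_apply, Fin.removeNth, Fin.succAbove]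
      show _ = Phi _
      rw [show ((Prod.map id ⇑MeasurableEquiv.finTwoArrow) ∘
          ⇑(MeasurableEquiv.piFinSuccAbove (fun _ : Fin 3 => ℝ) 2)) t = (t 2, t 0, t 1)
          from hFt]
      show ENNReal.ofReal (octa.indicator (fun t => 1 / Real.sqrt (deltaFun t)) t)
          = if |t 0| + |t 1| + |t 2| ≤ 1 then ENNReal.ofReal (core (t 2) (t 0) (t 1)) else 0
      by_cases ht : |t 0| + |t 1| + |t 2| ≤ 1
      · rw [Set.indicator_of_mem (show t ∈ octa from ht), if_pos ht]
        rfl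
      · rw [Set.indicator_of_notMem (show t ∉ octa from ht), if_neg ht,
          ENNReal.ofReal_zero]
    rw [integral_eq_lintegral_of_nonneg_ae
        (ae_of_all _ (Set.indicator_nonneg (fun t _ => by positivity)))
        ((hgmeas.indicator hocta).aestronglyMeasurable),
      key, lintegral_Phi,
      ENNReal.toReal_ofReal
        (by nlinarith [Real.pi_le_four, Real.pi_pos] : (0:ℝ) ≤ (4 - π) * π)]
  · rw [pow_two, ← div_div, mul_div_cancel_right₀ _ Real.pi_ne_zero]
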